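/- Let T₁ and T₂ be trees of height ω₁ in which any two elements have a meet, and suppose there exists a specialising function for (T₁, T₂). Then there is no weak embedding from T₁ into T₂. -/

import Mathlib

universe u

open Cardinal Ordinal Set Classical

noncomputable def omega1 : Ordinal.{u} := (Cardinal.aleph 1).ord

/-- A tree: a partial order in which the set of strict predecessors of each element
is well-ordered by `<`. -/
def IsTree (T : Type u) [PartialOrder T] : Prop :=
  ∀ x : T, IsWellOrder {y : T // y < x} (fun a b => (a : T) < (b : T))

/-- The height of an element of a tree: the order type of its set of strict predecessors. -/
noncomputable def treeHeight {T : Type u} [PartialOrder T] (x : T) : Ordinal.{u} :=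
  if h : IsWellOrder {y : T // y < x} (fun a b => (a : T) < (b : T)) then
    @Ordinal.type _ _ h else 0

/-- The tree has height `ω₁`: every level below `ω₁` is nonempty and the level `ω₁` is empty
(equivalently, all heights are `< ω₁`). -/
def HasHeightOmega1 (T : Type u) [PartialOrder T] : Prop :=
  (∀ α : Ordinal.{u}, α < omega1.{u} → ∃ x : T, treeHeight x = α) ∧
    ∀ x : T, treeHeight x < omega1.{u}

def NoUncountableChain (T : Type u) [PartialOrder T] : Prop :=
  ∀ C : Set T, IsChain (· < ·) C → C.Countable

def IsWideAronszajn (T : Type u) [PartialOrder T] : Prop :=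
  IsTree T ∧ Cardinal.mk T = Cardinal.aleph.{u} 1 ∧ HasHeightOmega1 T ∧ NoUncountableChain T

def IsAronszajn (T : Type u) [PartialOrder T] : Prop :=
  IsTree T ∧ HasHeightOmega1 T ∧
    (∀ α : Ordinal.{u}, {x : T | treeHeight x = α}.Countable) ∧ NoUncountableChain T

def IsWeakEmbedding {T₁ T₂ : Type u} [PartialOrder T₁] [PartialOrder T₂] (f : T₁ → T₂) : Prop :=
  ∀ x y : T₁, x < y → f x < f y

/-- Martin's axiom for ℵ₁ many dense sets. -/
def MAomega1 : Prop :=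
  ∀ (P : Type u) [PartialOrder P], Nonempty P →
    (∀ A : Set P, (A.Pairwise fun p q => ¬ ∃ r, p ≤ r ∧ q ≤ r) → A.Countable) →
    ∀ 𝒟 : Set (Set P), Cardinal.mk 𝒟 ≤ Cardinal.aleph.{u} 1 →
      (∀ D ∈ 𝒟, ∀ p : P, ∃ q ∈ D, p ≤ q) →
      ∃ G : Set P, (∀ p ∈ G, ∀ q ∈ G, ∃ r ∈ G, p ≤ r ∧ q ≤ r) ∧
        (∀ p ∈ G, ∀ q, q ≤ p → q ∈ G) ∧ ∀ D ∈ 𝒟, (G ∩ D).Nonempty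

/-- A bundled partially ordered type. -/
structure PoType : Type (u + 1) where
  carrier : Type u
  str : PartialOrder carrier

attribute [instance] PoType.str

/-- A specialising function for a pair of trees with meets: a colouring of the pairs
`(x, y)` lying on equal limit levels such that equal colours force incomparability on
both sides and `ht (x₁ ⊓ x₂) > ht (y₁ ⊓ y₂)`. -/
def IsSpecialisingFunction {T₁ T₂ : Type u} [SemilatticeInf T₁] [SemilatticeInf T₂]
    (c : T₁ → T₂ → ℕ) : Prop :=
  ∀ x₁ y₁ x₂ y₂,
    treeHeight x₁ = treeHeight y₁ → Order.IsSuccLimit (treeHeight x₁) →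
    treeHeight x₂ = treeHeight y₂ → Order.IsSuccLimit (treeHeight x₂) →
    c x₁ y₁ = c x₂ y₂ → ¬ (x₁ = x₂ ∧ y₁ = y₂) →
      treeHeight x₁ ≠ treeHeight x₂ ∧
      (¬ x₁ ≤ x₂ ∧ ¬ x₂ ≤ x₁) ∧ (¬ y₁ ≤ y₂ ∧ ¬ y₂ ≤ y₁) ∧
      treeHeight ((y₁ : T₂) ⊓ y₂) < treeHeight ((x₁ : T₁) ⊓ x₂)

section Helpers
variable {T : Type u} [PartialOrder T]

theorem treeHeight_def (hT : IsTree T) (x : T) :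
    treeHeight x = @Ordinal.type {y : T // y < x} (fun a b => (a : T) < (b : T)) (hT x) :=
  dif_pos (hT x)

theorem treeHeight_eq_typein (hT : IsTree T) {x y : T} (h : y < x) :
    treeHeight y = @Ordinal.typein {z : T // z < x} (fun a b => (a : T) < (b : T)) (hT x) ⟨y, h⟩ := by
  haveI := hT x
  haveI := hT y
  rw [treeHeight_def hT, ← Ordinal.type_subrel]
  refine Ordinal.type_eq.2 ⟨⟨⟨fun z => ⟨⟨z.1, lt_trans z.2 h⟩, z.2⟩,
    fun b => ⟨b.1.1, b.2⟩, fun z => rfl, fun b => rfl⟩, Iff.rfl⟩⟩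

theorem treeHeight_lt (hT : IsTree T) {x y : T} (h : y < x) : treeHeight y < treeHeight x := by
  haveI := hT x
  rw [treeHeight_eq_typein hT h, treeHeight_def hT x]
  exact Ordinal.typein_lt_type _ _

theorem treeHeight_mono (hT : IsTree T) {x y : T} (h : y ≤ x) : treeHeight y ≤ treeHeight x := by
  rcases eq_or_lt_of_le h with rfl | h'
  · exact le_rfl
  · exact (treeHeight_lt hT h').le

theorem exists_height (hT : IsTree T) {x : T} {β : Ordinal.{u}} (h : β < treeHeight x) :
    ∃ y, y < x ∧ treeHeight y = β := by
  haveI := hT x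
  rw [treeHeight_def hT] at h
  obtain ⟨a, ha⟩ := Ordinal.typein_surj _ h
  refine ⟨a.1, a.2, ?_⟩
  rw [treeHeight_eq_typein hT a.2]
  simpa using ha

theorem comparable_of_le_of_lt (hT : IsTree T) {x a b : T} (ha : a ≤ x) (hb : b < x) :
    a ≤ b ∨ b ≤ a := by
  rcases eq_or_lt_of_le ha with rfl | ha'
  · exact Or.inr hb.le
  · haveI := hT x
    rcases @trichotomous _ (fun p q : {y : T // y < x} => (p : T) < (q : T)) _ ⟨a, ha'⟩ ⟨b, hb⟩
      with h | h | h
    · exact Or.inl h.le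
    · exact Or.inl (le_of_eq (congrArg Subtype.val h))
    · exact Or.inr h.le

end Helpers

theorem treeHeight_le_of_embedding {T₁ T₂ : Type u} [PartialOrder T₁] [PartialOrder T₂]
    (h₁ : IsTree T₁) (h₂ : IsTree T₂) {f : T₁ → T₂} (hf : IsWeakEmbedding f) (x : T₁) :
    treeHeight x ≤ treeHeight (f x) := by
  haveI := h₁ x; haveI := h₂ (f x)
  rw [treeHeight_def h₁, treeHeight_def h₂]
  exact (RelEmbedding.ofMonotone
    (fun y : {y : T₁ // y < x} => (⟨f y.1, hf _ _ y.2⟩ : {z : T₂ // z < f x}))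
    (fun a b h => hf _ _ h)).ordinal_type_le

theorem omega_mul_succ_lt {α : Ordinal.{u}} (h : α < omega1.{u}) :
    (Ordinal.omega0.{u}) * (α + 1) < omega1.{u} := by
  rw [omega1, Cardinal.lt_ord] at *
  rw [Ordinal.card_mul, Ordinal.card_add, Ordinal.card_omega0, Ordinal.card_one]
  exact Cardinal.mul_lt_of_lt (aleph0_le_aleph 1) (aleph0_lt_aleph_one)
    (Cardinal.add_lt_of_lt (aleph0_le_aleph 1) h
      (lt_of_lt_of_le Cardinal.one_lt_aleph0 (aleph0_le_aleph 1)))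

theorem omega_mul_succ_isLimit (α : Ordinal.{u}) :
    Order.IsSuccLimit (Ordinal.omega0.{u} * (α + 1)) := by
  rw [Ordinal.add_one_eq_succ, Ordinal.mul_succ]
  exact Ordinal.isSuccLimit_add _ Ordinal.isSuccLimit_omega0

theorem omega_mul_succ_inj {α β : Ordinal.{u}} (h : α ≠ β) :
    Ordinal.omega0.{u} * (α + 1) ≠ Ordinal.omega0.{u} * (β + 1) := by
  rcases h.lt_or_gt with h' | h'
  · exact ne_of_lt (mul_lt_mul_of_pos_left (by simpa using h') Ordinal.omega0_pos)
  · exact (ne_of_lt (mul_lt_mul_of_pos_left (by simpa using h') Ordinal.omega0_pos)).symm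

theorem pigeonhole_omega1 (G : (Set.Iio omega1.{u} : Set Ordinal.{u}) → ℕ) :
    ∃ a b, a ≠ b ∧ G a = G b := by
  by_contra hcon
  push_neg at hcon
  have hinj : Function.Injective G := fun a b hab => by
    by_contra hne; exact hcon a b hne hab
  have hcnt : (Set.Iio omega1.{u}).Countable :=
    Set.countable_iff_exists_injective.2 ⟨G, hinj⟩
  have := hcnt.le_aleph0
  rw [Ordinal.mk_Iio_ordinal, omega1, Cardinal.card_ord, ← Cardinal.lift_aleph0.{u+1, u},
    Cardinal.lift_le] at this
  exact (Cardinal.aleph0_lt_aleph_one).not_ge this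

/-- If `(T₁, T₂, c)` is a specialising triple of trees of height `ω₁`, then there is no
weak embedding of `T₁` into `T₂`. -/
theorem specialising_triple_no_weak_embedding {T₁ T₂ : Type u}
    [SemilatticeInf T₁] [SemilatticeInf T₂]
    (h₁ : IsTree T₁) (h₂ : IsTree T₂)
    (hh₁ : HasHeightOmega1 T₁) (hh₂ : HasHeightOmega1 T₂)
    (c : T₁ → T₂ → ℕ) (hc : IsSpecialisingFunction c) :
    ¬ ∃ f : T₁ → T₂, IsWeakEmbedding f := by
  rintro ⟨f, hf⟩
  -- for each limit β < ω₁, find a pair (x, y) of height β with y ≤ f x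
  have key : ∀ β : Ordinal.{u}, β < omega1.{u} →
      ∃ p : T₁ × T₂, treeHeight p.1 = β ∧ treeHeight p.2 = β ∧ p.2 ≤ f p.1 := by
    intro β hβ
    obtain ⟨x, hx⟩ := hh₁.1 β hβ
    have hle : β ≤ treeHeight (f x) := hx ▸ treeHeight_le_of_embedding h₁ h₂ hf x
    rcases eq_or_lt_of_le hle with heq | hlt
    · exact ⟨(x, f x), hx, heq.symm, le_rfl⟩
    · obtain ⟨y, hyx, hy⟩ := exists_height h₂ hlt
      exact ⟨(x, y), hx, hy, hyx.le⟩
  -- the colouring of the canonical pairs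
  set B : (Set.Iio omega1.{u} : Set Ordinal.{u}) → Ordinal.{u} :=
    fun a => Ordinal.omega0.{u} * ((a : Ordinal.{u}) + 1) with hB
  have hBlt : ∀ a, B a < omega1.{u} := fun a => omega_mul_succ_lt a.2
  set P : (Set.Iio omega1.{u} : Set Ordinal.{u}) → T₁ × T₂ :=
    fun a => Classical.choose (key (B a) (hBlt a)) with hP
  have hPspec : ∀ a, treeHeight (P a).1 = B a ∧ treeHeight (P a).2 = B a ∧
      (P a).2 ≤ f (P a).1 := fun a => Classical.choose_spec (key (B a) (hBlt a))
  obtain ⟨a, b, hab, hGab⟩ := pigeonhole_omega1 (fun a => c (P a).1 (P a).2)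
  obtain ⟨hx1, hy1, hyf1⟩ := hPspec a
  obtain ⟨hx2, hy2, hyf2⟩ := hPspec b
  have hBab : B a ≠ B b := omega_mul_succ_inj (fun h => hab (Subtype.ext h))
  have hne : ¬ ((P a).1 = (P b).1 ∧ (P a).2 = (P b).2) := by
    rintro ⟨h, -⟩
    exact hBab (hx1 ▸ hx2 ▸ h ▸ rfl)
  obtain ⟨-, ⟨hxx', hx'x⟩, ⟨hyy', hy'y⟩, hmeet⟩ :=
    hc (P a).1 (P a).2 (P b).1 (P b).2 (hx1.trans hy1.symm)
      (by rw [hx1]; exact omega_mul_succ_isLimit _)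
      (hx2.trans hy2.symm) (by rw [hx2]; exact omega_mul_succ_isLimit _) hGab hne
  set x := (P a).1; set y := (P a).2; set x' := (P b).1; set y' := (P b).2
  set m := x ⊓ x' with hm
  have hmx : m < x := lt_of_le_of_ne inf_le_left (fun h => hxx' (h ▸ inf_le_right))
  have hmx' : m < x' := lt_of_le_of_ne inf_le_right (fun h => hx'x (h ▸ inf_le_left))
  have h1 : f m < f x := hf m x hmx
  have h2 : f m < f x' := hf m x' hmx'
  rcases comparable_of_le_of_lt h₂ hyf1 h1 with hyfm | hfmy
  · rcases comparable_of_le_of_lt h₂ hyf2 (lt_of_le_of_lt hyfm h2) with h | h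
    · exact hy'y h
    · exact hyy' h
  · rcases comparable_of_le_of_lt h₂ hyf2 h2 with hy'fm | hfmy'
    · exact hy'y (le_trans hy'fm hfmy)
    · have : treeHeight m ≤ treeHeight (y ⊓ y') :=
        le_trans (treeHeight_le_of_embedding h₁ h₂ hf m)
          (treeHeight_mono h₂ (le_inf hfmy hfmy'))
      exact absurd hmeet (not_lt.2 this)
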